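/- arXiv:2009.04613 — 3 statements merged into one kernel-verified Lean document; each statement's English description precedes it below -/
import Mathlib

section
/- If u : ℝ^n → ℝ is a convex C² function, then the operator θ(D²u) = Σᵢ arctan(λᵢ(D²u)) is concave along convex functions: for convex symmetric positive semidefinite matrices A, B and t ∈ [0,1], Σᵢ arctan(λᵢ(tA + (1-t)B)) ≥ t Σᵢ arctan(λᵢ(A)) + (1-t) Σᵢ arctan(λᵢ(B)), where λᵢ(M) denotes the eigenvalues of the symmetric matrix M. -/
open Real Matrix

private lemma arctan_concaveOn' : ConcaveOn ℝ (Set.Ici (0:ℝ)) arctan := by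
  apply concaveOn_of_deriv2_nonpos' (convex_Ici 0)
  · exact fun x _ => (Real.differentiable_arctan x).differentiableWithinAt
  · rw [Real.deriv_arctan]
    intro x _
    apply DifferentiableAt.differentiableWithinAt
    have h : (1 : ℝ) + x ^ 2 ≠ 0 := by positivity
    exact (differentiable_const (1:ℝ)).differentiableAt.div
      (differentiableAt_id.pow 2 |>.const_add 1) h
  · intro x hx
    have h : ∀ y : ℝ, deriv (deriv arctan) y = -(2 * y) / (1 + y ^ 2) ^ 2 := by
      intro y
      rw [Real.deriv_arctan]
      have hy : (1 : ℝ) + y ^ 2 ≠ 0 := by positivity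
      have h1 : HasDerivAt (fun z : ℝ => 1 + z ^ 2) (2 * y) y := by
        simpa using ((hasDerivAt_pow 2 y).const_add 1)
      have := h1.inv hy
      rw [show (fun x : ℝ => 1 / (1 + x ^ 2)) = (fun z : ℝ => 1 + z ^ 2)⁻¹ by
        funext z; simp]
      exact this.deriv
    have h2 : deriv^[2] arctan x = deriv (deriv arctan) x := by
      simp [Function.iterate_succ, Function.iterate_one]
    rw [h2, h]
    have hx0 : (0:ℝ) ≤ x := hx
    apply div_nonpos_of_nonpos_of_nonneg <;> nlinarith

private lemma quad_expand' {n : ℕ} (M : Matrix (Fin n) (Fin n) ℝ) (hM : M.IsHermitian)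
    (x : EuclideanSpace ℝ (Fin n)) :
    (x : Fin n → ℝ) ⬝ᵥ (M *ᵥ (x : Fin n → ℝ)) =
      ∑ j, hM.eigenvalues j * (inner ℝ (hM.eigenvectorBasis j) x : ℝ) ^ 2 := by
  have h1 := hM.eigenvectorBasis.sum_inner_mul_inner x
      ((WithLp.equiv 2 (Fin n → ℝ)).symm (M *ᵥ (x : Fin n → ℝ)))
  have hL : (inner ℝ x ((WithLp.equiv 2 (Fin n → ℝ)).symm (M *ᵥ (x : Fin n → ℝ))) : ℝ)
      = (x : Fin n → ℝ) ⬝ᵥ (M *ᵥ (x : Fin n → ℝ)) := by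
    rw [EuclideanSpace.inner_eq_star_dotProduct, dotProduct_comm]
    rfl
  have hterm : ∀ j, (inner ℝ (hM.eigenvectorBasis j)
      ((WithLp.equiv 2 (Fin n → ℝ)).symm (M *ᵥ (x : Fin n → ℝ))) : ℝ)
      = hM.eigenvalues j * (inner ℝ (hM.eigenvectorBasis j) x : ℝ) := by
    intro j
    have hMT : Mᵀ = M := by
      have := hM.eq
      rwa [Matrix.conjTranspose_eq_transpose_of_trivial] at this
    have hdot : (hM.eigenvectorBasis j : Fin n → ℝ) ⬝ᵥ (M *ᵥ (x : Fin n → ℝ))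
        = (M *ᵥ (hM.eigenvectorBasis j : Fin n → ℝ)) ⬝ᵥ (x : Fin n → ℝ) := by
      rw [Matrix.dotProduct_mulVec, ← Matrix.mulVec_transpose, hMT]
    rw [EuclideanSpace.inner_eq_star_dotProduct, EuclideanSpace.inner_eq_star_dotProduct,
      dotProduct_comm, dotProduct_comm x.ofLp]
    show (hM.eigenvectorBasis j : Fin n → ℝ) ⬝ᵥ (M *ᵥ (x : Fin n → ℝ))
        = hM.eigenvalues j * ((hM.eigenvectorBasis j : Fin n → ℝ) ⬝ᵥ (x : Fin n → ℝ))
    have he : M *ᵥ (hM.eigenvectorBasis j : Fin n → ℝ)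
        = hM.eigenvalues j • (hM.eigenvectorBasis j : Fin n → ℝ) := hM.mulVec_eigenvectorBasis j
    rw [hdot, he, smul_dotProduct]
    simp [smul_eq_mul]
  rw [hL] at h1
  rw [← h1]
  congr 1
  ext j
  rw [hterm j, real_inner_comm]
  ring

private lemma parseval' {n : ℕ} (b : OrthonormalBasis (Fin n) ℝ (EuclideanSpace ℝ (Fin n)))
    (x : EuclideanSpace ℝ (Fin n)) (hx : ‖x‖ = 1) :
    ∑ i, (inner ℝ (b i) x : ℝ) ^ 2 = 1 := by
  have h := b.sum_inner_mul_inner x x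
  have hxx : (inner ℝ x x : ℝ) = 1 := by
    rw [real_inner_self_eq_norm_sq, hx]; norm_num
  rw [hxx] at h
  rw [← h]
  congr 1
  ext i
  rw [real_inner_comm x (b i)]
  ring

theorem arctan_trace_concave_on_psd
    (n : ℕ) (A B : Matrix (Fin n) (Fin n) ℝ)
    (hA : A.PosSemidef) (hB : B.PosSemidef)
    (t : ℝ) (ht : t ∈ Set.Icc (0:ℝ) 1)
    (hC : (t • A + (1 - t) • B).IsHermitian) :
    t * ∑ i, arctan (hA.1.eigenvalues i) + (1 - t) * ∑ i, arctan (hB.1.eigenvalues i) ≤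
      ∑ i, arctan (hC.eigenvalues i) := by
  obtain ⟨ht0, ht1⟩ := ht
  have ht1' : (0:ℝ) ≤ 1 - t := by linarith
  set v := hC.eigenvectorBasis with hv
  -- quadratic forms of A and B at the eigenvectors of C
  set qA : Fin n → ℝ := fun i => (v i : Fin n → ℝ) ⬝ᵥ (A *ᵥ (v i : Fin n → ℝ)) with hqA
  set qB : Fin n → ℝ := fun i => (v i : Fin n → ℝ) ⬝ᵥ (B *ᵥ (v i : Fin n → ℝ)) with hqB
  have hqA0 : ∀ i, 0 ≤ qA i := fun i => by
    simpa using hA.re_dotProduct_nonneg (v i : Fin n → ℝ)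
  have hqB0 : ∀ i, 0 ≤ qB i := fun i => by
    simpa using hB.re_dotProduct_nonneg (v i : Fin n → ℝ)
  -- eigenvalue of C as a convex combination of quadratic forms
  have hvunit : ∀ i, ‖v i‖ = 1 := fun i => hC.eigenvectorBasis.orthonormal.1 i
  have hvv : ∀ i, (v i : Fin n → ℝ) ⬝ᵥ (v i : Fin n → ℝ) = 1 := by
    intro i
    have : (inner ℝ (v i) (v i) : ℝ) = 1 := by
      rw [real_inner_self_eq_norm_sq, hvunit i]; norm_num
    exact this
  have stepA : ∀ i, hC.eigenvalues i = t * qA i + (1 - t) * qB i := by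
    intro i
    have he : (t • A + (1 - t) • B) *ᵥ (v i : Fin n → ℝ)
        = hC.eigenvalues i • (v i : Fin n → ℝ) := hC.mulVec_eigenvectorBasis i
    have hdot : (v i : Fin n → ℝ) ⬝ᵥ ((t • A + (1 - t) • B) *ᵥ (v i : Fin n → ℝ))
        = hC.eigenvalues i := by
      rw [he, dotProduct_smul, smul_eq_mul, hvv i, mul_one]
    rw [← hdot, Matrix.add_mulVec, Matrix.smul_mulVec, Matrix.smul_mulVec,
      dotProduct_add, dotProduct_smul, dotProduct_smul]
    simp [smul_eq_mul, hqA, hqB]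
  -- Jensen on eigenvectors of C:
  have stepD : ∀ (M : Matrix (Fin n) (Fin n) ℝ) (hM : M.PosSemidef) (i : Fin n),
      ∑ j, (inner ℝ (hM.1.eigenvectorBasis j) (v i) : ℝ) ^ 2 * arctan (hM.1.eigenvalues j)
        ≤ arctan ((v i : Fin n → ℝ) ⬝ᵥ (M *ᵥ (v i : Fin n → ℝ))) := by
    intro M hM i
    have hsum : ∑ j, (inner ℝ (hM.1.eigenvectorBasis j) (v i) : ℝ) ^ 2 = 1 :=
      parseval' hM.1.eigenvectorBasis (v i) (hvunit i)
    have hjensen := arctan_concaveOn'.le_map_sum (t := Finset.univ)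
      (w := fun j => (inner ℝ (hM.1.eigenvectorBasis j) (v i) : ℝ) ^ 2)
      (p := fun j => hM.1.eigenvalues j)
      (fun j _ => sq_nonneg _) hsum (fun j _ => hM.eigenvalues_nonneg j)
    rw [quad_expand' M hM.1 (v i)]
    calc ∑ j, (inner ℝ (hM.1.eigenvectorBasis j) (v i) : ℝ) ^ 2 * arctan (hM.1.eigenvalues j)
        ≤ arctan (∑ j, (inner ℝ (hM.1.eigenvectorBasis j) (v i) : ℝ) ^ 2 • hM.1.eigenvalues j) := by
          simpa [smul_eq_mul] using hjensen
      _ = arctan (∑ j, hM.1.eigenvalues j * (inner ℝ (hM.1.eigenvectorBasis j) (v i) : ℝ) ^ 2) := by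
          congr 1; exact Finset.sum_congr rfl fun j _ => by simp [smul_eq_mul, mul_comm]
  -- double sum collapse
  have collapse : ∀ (M : Matrix (Fin n) (Fin n) ℝ) (hM : M.PosSemidef),
      ∑ i, ∑ j, (inner ℝ (hM.1.eigenvectorBasis j) (v i) : ℝ) ^ 2 * arctan (hM.1.eigenvalues j)
        = ∑ j, arctan (hM.1.eigenvalues j) := by
    intro M hM
    rw [Finset.sum_comm]
    refine Finset.sum_congr rfl fun j _ => ?_
    rw [← Finset.sum_mul]
    have : ∑ i, (inner ℝ (hM.1.eigenvectorBasis j) (v i) : ℝ) ^ 2 = 1 := by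
      have h := parseval' v (hM.1.eigenvectorBasis j)
        (hM.1.eigenvectorBasis.orthonormal.1 j)
      rw [← h]
      exact Finset.sum_congr rfl fun i _ => by rw [real_inner_comm]
    rw [this, one_mul]
  -- combine
  calc t * ∑ i, arctan (hA.1.eigenvalues i) + (1 - t) * ∑ i, arctan (hB.1.eigenvalues i)
      = ∑ i, (t * (∑ j, (inner ℝ (hA.1.eigenvectorBasis j) (v i) : ℝ) ^ 2
              * arctan (hA.1.eigenvalues j))
          + (1 - t) * (∑ j, (inner ℝ (hB.1.eigenvectorBasis j) (v i) : ℝ) ^ 2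
              * arctan (hB.1.eigenvalues j))) := by
        rw [Finset.sum_add_distrib, ← Finset.mul_sum, ← Finset.mul_sum,
          collapse A hA, collapse B hB]
    _ ≤ ∑ i, (t * arctan (qA i) + (1 - t) * arctan (qB i)) := by
        refine Finset.sum_le_sum fun i _ => ?_
        exact add_le_add (mul_le_mul_of_nonneg_left (stepD A hA i) ht0)
          (mul_le_mul_of_nonneg_left (stepD B hB i) ht1')
    _ ≤ ∑ i, arctan (hC.eigenvalues i) := by
        refine Finset.sum_le_sum fun i _ => ?_
        have hcc := arctan_concaveOn'.2 (Set.mem_Ici.2 (hqA0 i)) (Set.mem_Ici.2 (hqB0 i))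
          ht0 ht1' (by ring)
        rw [stepA i]
        simpa [smul_eq_mul] using hcc
end

section
/- Let f : ℝ^n → ℝ be convex and differentiable with Df Hölder continuous of exponent β ∈ (0,1) (i.e., f ∈ C^{1,β}), and suppose its Legendre transform f* is C² on an open set containing ȳ₀ = Df(x₀). If D²f*(ȳ₀) is positive definite, then f is twice differentiable at x₀ with D²f(x₀) = (D²f*(ȳ₀))^{-1}; in particular f is C^{1,1} near x₀. -/
open Real RealInnerProductSpace Metric

lemma aux_grad_ineq {n : ℕ} (f : EuclideanSpace ℝ (Fin n) → ℝ)
    (hconv : ConvexOn ℝ Set.univ f) (hdiff : Differentiable ℝ f)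
    (x z : EuclideanSpace ℝ (Fin n)) :
    ⟪gradient f x, z - x⟫ ≤ f z - f x := by
  set g : ℝ → ℝ := fun t => f (x + t • (z - x)) with hg
  have hline : ∀ t : ℝ, HasDerivAt (fun t : ℝ => x + t • (z - x)) (z - x) t := by
    intro t
    simpa using ((hasDerivAt_id t).smul_const (z - x)).const_add x
  have hgd : HasDerivAt g (⟪gradient f x, z - x⟫) 0 := by
    have h1 : HasFDerivAt f (fderiv ℝ f x) (x + (0:ℝ) • (z - x)) := by
      simpa using (hdiff x).hasFDerivAt
    have h2 := h1.comp_hasDerivAt (0 : ℝ) (hline 0)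
    have h3 : fderiv ℝ f x (z - x) = ⟪gradient f x, z - x⟫ := by
      have := (hdiff x).hasGradientAt
      rw [hasGradientAt_iff_hasFDerivAt] at this
      rw [this.fderiv]
      simp [InnerProductSpace.toDual_apply_apply]
    rw [← h3]; exact h2
  have hgconv : ConvexOn ℝ Set.univ g := by
    have := hconv.comp_affineMap (AffineMap.lineMap x z)
    have he : g = f ∘ (AffineMap.lineMap x z : ℝ →ᵃ[ℝ] _) := by
      funext t
      simp [hg, AffineMap.lineMap_apply, add_comm, vsub_eq_sub, vadd_eq_add]
    rw [he]
    simpa using this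
  have h01 : (0:ℝ) < 1 := one_pos
  have hsl := hgconv.le_slope_of_hasDerivAt (Set.mem_univ 0) (Set.mem_univ 1) h01 hgd
  rw [slope_def_field] at hsl
  have hg1 : g 1 = f z := by simp [hg]
  have hg0 : g 0 = f x := by simp [hg]
  rw [hg1, hg0] at hsl
  simpa using hsl

set_option maxHeartbeats 1000000 in
theorem legendre_duality_hessian_inverse
    (n : ℕ) (β L : ℝ) (hβ : β ∈ Set.Ioo (0:ℝ) 1)
    (f : EuclideanSpace ℝ (Fin n) → ℝ)
    (hconv : ConvexOn ℝ Set.univ f)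
    (hdiff : Differentiable ℝ f)
    (hHolder : ∀ x y, ‖gradient f x - gradient f y‖ ≤ L * ‖x - y‖ ^ β)
    (fstar : EuclideanSpace ℝ (Fin n) → ℝ)
    (hfstar : fstar = fun y => ⨆ x : EuclideanSpace ℝ (Fin n), (⟪x, y⟫ - f x))
    (x₀ : EuclideanSpace ℝ (Fin n))
    (s : Set (EuclideanSpace ℝ (Fin n))) (hs : s ∈ nhds (gradient f x₀))
    (hC2 : ContDiffOn ℝ 2 fstar s)
    (H : EuclideanSpace ℝ (Fin n) →L[ℝ] EuclideanSpace ℝ (Fin n))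
    (hH : HasFDerivAt (gradient fstar) H (gradient f x₀))
    (hpos : ∀ v : EuclideanSpace ℝ (Fin n), v ≠ 0 → 0 < ⟪H v, v⟫) :
    ∃ G : EuclideanSpace ℝ (Fin n) →L[ℝ] EuclideanSpace ℝ (Fin n),
      HasFDerivAt (gradient f) G x₀ ∧
      H.comp G = ContinuousLinearMap.id ℝ (EuclideanSpace ℝ (Fin n)) ∧
      G.comp H = ContinuousLinearMap.id ℝ (EuclideanSpace ℝ (Fin n)) ∧
      ∃ C : ℝ, ∃ r > (0:ℝ), ∀ x ∈ ball x₀ r, ∀ y ∈ ball x₀ r,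
        ‖gradient f x - gradient f y‖ ≤ C * ‖x - y‖ := by
  set y₀ := gradient f x₀ with hy₀
  -- Step: greatest element of the sup defining fstar at gradient points
  have lemA : ∀ x : EuclideanSpace ℝ (Fin n), IsGreatest (Set.range fun z => ⟪z, gradient f x⟫ - f z)
      (⟪x, gradient f x⟫ - f x) := by
    intro x
    constructor
    · exact ⟨x, rfl⟩
    · rintro w ⟨z, rfl⟩
      dsimp only
      have := aux_grad_ineq f hconv hdiff x z
      have h2 : ⟪z - x, gradient f x⟫ ≤ f z - f x := by
        rwa [real_inner_comm] at this
      rw [inner_sub_left] at h2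
      linarith
  have fstarA : ∀ x : EuclideanSpace ℝ (Fin n), fstar (gradient f x) = ⟪x, gradient f x⟫ - f x := by
    intro x
    rw [hfstar]
    exact (lemA x).csSup_eq
  -- the domain set
  set Gset : Set (EuclideanSpace ℝ (Fin n)) := {y | BddAbove (Set.range fun z => ⟪z, y⟫ - f z)} with hGset
  have hGconv : Convex ℝ Gset := by
    rintro y₁ h₁ y₂ h₂ a b ha hb hab
    obtain ⟨M₁, hM₁⟩ := h₁
    obtain ⟨M₂, hM₂⟩ := h₂
    refine ⟨a * M₁ + b * M₂, ?_⟩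
    rintro w ⟨z, rfl⟩
    dsimp only
    have e1 : ⟪z, y₁⟫ - f z ≤ M₁ := hM₁ ⟨z, rfl⟩
    have e2 : ⟪z, y₂⟫ - f z ≤ M₂ := hM₂ ⟨z, rfl⟩
    have : ⟪z, a • y₁ + b • y₂⟫ - f z
        = a * (⟪z, y₁⟫ - f z) + b * (⟪z, y₂⟫ - f z) := by
      rw [inner_add_right, real_inner_smul_right, real_inner_smul_right]
      have : a * f z + b * f z = f z := by rw [← add_mul, hab, one_mul]
      ring_nf
      nlinarith [this]
    rw [this]
    have := mul_le_mul_of_nonneg_left e1 ha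
    have := mul_le_mul_of_nonneg_left e2 hb
    linarith
  have hGrange : ∀ x : EuclideanSpace ℝ (Fin n), gradient f x ∈ Gset := fun x => ⟨_, (lemA x).2⟩
  have hGle : ∀ y ∈ Gset, ∀ x : EuclideanSpace ℝ (Fin n), ⟪x, y⟫ - f x ≤ fstar y := by
    intro y hy x
    rw [hfstar]
    exact le_ciSup hy x
  -- y₀ is in the interior of Gset
  have hy₀int : y₀ ∈ interior Gset := by
    by_contra hni
    obtain ⟨u, hune, husep⟩ :
        ∃ u : EuclideanSpace ℝ (Fin n), u ≠ 0 ∧ ∀ y ∈ Gset, ⟪u, y⟫ ≤ ⟪u, y₀⟫ := by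
      by_cases hne : (interior Gset).Nonempty
      · obtain ⟨ℓ, hℓ⟩ := geometric_hahn_banach_open_point hGconv.interior isOpen_interior hni
        obtain ⟨a₀, ha₀⟩ := hne
        refine ⟨(InnerProductSpace.toDual ℝ _).symm ℓ, ?_, ?_⟩
        · intro h0
          have : ℓ = 0 := by
            have := congrArg (InnerProductSpace.toDual ℝ (EuclideanSpace ℝ (Fin n))) h0
            simpa using this
          rw [this] at hℓ
          simpa using hℓ a₀ ha₀
        · intro y hy
          rw [InnerProductSpace.toDual_symm_apply, InnerProductSpace.toDual_symm_apply]
          have hcombo : ∀ t : ℝ, t ∈ Set.Ioc (0:ℝ) 1 →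
              t * ℓ a₀ + (1 - t) * ℓ y ≤ ℓ y₀ := by
            intro t ht
            have hmem := hGconv.combo_interior_closure_mem_interior (a := t) (b := 1 - t) ha₀
              (subset_closure hy) ht.1 (by linarith [ht.2]) (by ring)
            have := hℓ _ hmem
            rw [map_add, map_smul, map_smul] at this
            simpa using this.le
          have htend : Filter.Tendsto (fun t : ℝ => t * ℓ a₀ + (1 - t) * ℓ y)
              (nhdsWithin 0 (Set.Ioi 0)) (nhds (ℓ y)) := by
            have hcont : Continuous (fun t : ℝ => t * ℓ a₀ + (1 - t) * ℓ y) :=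
              (continuous_id.mul continuous_const).add
                ((continuous_const.sub continuous_id).mul continuous_const)
            have h0 : Filter.Tendsto (fun t : ℝ => t * ℓ a₀ + (1 - t) * ℓ y)
                (nhdsWithin 0 (Set.Ioi 0)) (nhds ((0:ℝ) * ℓ a₀ + (1 - 0) * ℓ y)) :=
              (hcont.tendsto 0).mono_left nhdsWithin_le_nhds
            simpa using h0
          refine le_of_tendsto htend ?_
          filter_upwards [Ioc_mem_nhdsGT_of_mem (by constructor <;> norm_num :
            (0:ℝ) ∈ Set.Ico (0:ℝ) 1)] with t ht using hcombo t ht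
      · have hspan : affineSpan ℝ Gset ≠ ⊤ := by
          exact fun h => hne (hGconv.interior_nonempty_iff_affineSpan_eq_top.mpr h)
        have hnonempty : ((affineSpan ℝ Gset : AffineSubspace ℝ
            (EuclideanSpace ℝ (Fin n))) : Set (EuclideanSpace ℝ (Fin n))).Nonempty :=
          ⟨y₀, subset_affineSpan ℝ Gset (hGrange x₀)⟩
        have hdir : (affineSpan ℝ Gset).direction ≠ ⊤ := by
          intro h
          exact hspan ((AffineSubspace.direction_eq_top_iff_of_nonempty hnonempty).mp h)
        have horth : ((affineSpan ℝ Gset).direction)ᗮ ≠ ⊥ := by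
          exact fun h => hdir (Submodule.orthogonal_eq_bot_iff.mp h)
        obtain ⟨u, humem, hune⟩ := Submodule.exists_mem_ne_zero_of_ne_bot horth
        refine ⟨u, hune, ?_⟩
        intro y hy
        have hv : y - y₀ ∈ (affineSpan ℝ Gset).direction := by
          have := AffineSubspace.vsub_mem_direction (subset_affineSpan ℝ Gset hy)
            (subset_affineSpan ℝ Gset (hGrange x₀))
          simpa using this
        have : ⟪u, y - y₀⟫ = 0 := by
          rw [real_inner_comm]
          exact Submodule.inner_right_of_mem_orthogonal hv humem
        rw [inner_sub_right] at this
        linarith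
    -- fstar vanishes on the open half-space beyond the separating hyperplane
    have hjunk : ∀ y : EuclideanSpace ℝ (Fin n), ⟪u, y₀⟫ < ⟪u, y⟫ → fstar y = 0 := by
      intro y hy
      have hnB : ¬ BddAbove (Set.range fun z => ⟪z, y⟫ - f z) := by
        intro hB
        have : y ∈ Gset := hB
        exact absurd (husep y this) (not_le.mpr hy)
      rw [hfstar]
      exact Real.iSup_of_not_bddAbove hnB
    have hPopen : IsOpen {y : EuclideanSpace ℝ (Fin n) | ⟪u, y₀⟫ < ⟪u, y⟫} := by
      exact isOpen_lt continuous_const (continuous_const.inner continuous_id)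
    have hgradP : ∀ y : EuclideanSpace ℝ (Fin n), ⟪u, y₀⟫ < ⟪u, y⟫ →
        gradient fstar y = 0 := by
      intro y hy
      have hev : fstar =ᶠ[nhds y] (fun _ => (0:ℝ)) := by
        filter_upwards [hPopen.mem_nhds hy] with w hw using hjunk w hw
      rw [hev.gradient_eq, gradient_fun_const]
    set q : ℝ → EuclideanSpace ℝ (Fin n) := fun t => gradient fstar (y₀ + t • u) with hqdef
    have hline : ∀ t : ℝ, HasDerivAt (fun t : ℝ => y₀ + t • u) u t := by
      intro t
      simpa using ((hasDerivAt_id t).smul_const u).const_add y₀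
    have hq : HasDerivAt q (H u) 0 := by
      have h1 : HasFDerivAt (gradient fstar) H (y₀ + (0:ℝ) • u) := by simpa using hH
      exact h1.comp_hasDerivAt 0 (hline 0)
    have hq0 : ∀ t : ℝ, 0 < t → q t = 0 := by
      intro t ht
      apply hgradP
      rw [inner_add_right, real_inner_smul_right]
      have hipos : (0:ℝ) < ⟪u, u⟫ := by
        rw [real_inner_self_eq_norm_mul_norm]
        exact mul_pos (norm_pos_iff.mpr hune) (norm_pos_iff.mpr hune)
      have : 0 < t * ⟪u, u⟫ := mul_pos ht hipos
      linarith
    have hq00 : q 0 = 0 := by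
      have h1 : Filter.Tendsto q (nhdsWithin 0 (Set.Ioi 0)) (nhds (q 0)) :=
        (hq.continuousAt.continuousWithinAt).tendsto
      have h2 : Filter.Tendsto q (nhdsWithin 0 (Set.Ioi 0)) (nhds 0) := by
        refine Filter.Tendsto.congr' ?_ tendsto_const_nhds
        filter_upwards [self_mem_nhdsWithin] with t ht using (hq0 t ht).symm
      exact tendsto_nhds_unique h1 h2
    have hHu : H u = 0 := by
      have ha : HasDerivWithinAt q (H u) (Set.Ici 0) 0 := hq.hasDerivWithinAt
      have hb : HasDerivWithinAt (fun _ : ℝ => (0 : EuclideanSpace ℝ (Fin n)))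
          (H u) (Set.Ici 0) 0 := by
        refine ha.congr ?_ hq00.symm
        intro t ht
        rcases eq_or_lt_of_le (Set.mem_Ici.mp ht) with h | h
        · rw [← h]; exact hq00.symm
        · exact (hq0 t h).symm
      have hc : HasDerivWithinAt (fun _ : ℝ => (0 : EuclideanSpace ℝ (Fin n)))
          (0 : EuclideanSpace ℝ (Fin n)) (Set.Ici 0) 0 :=
        (hasDerivAt_const _ _).hasDerivWithinAt
      have hud : UniqueDiffWithinAt ℝ (Set.Ici (0:ℝ)) 0 :=
        uniqueDiffOn_Ici 0 0 Set.self_mem_Ici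
      have e1 := hb.derivWithin hud
      have e2 := hc.derivWithin hud
      rw [e1] at e2
      exact e2.symm ▸ rfl
    have := hpos u hune
    rw [hHu] at this
    simp at this
  -- gradient of fstar at gradient points
  have φgrad : ∀ x : EuclideanSpace ℝ (Fin n), gradient f x ∈ interior Gset → gradient f x ∈ interior s →
      gradient fstar (gradient f x) = x := by
    intro x hxG hxs
    have hdf : DifferentiableAt ℝ fstar (gradient f x) := by
      have h1 : ContDiffAt ℝ 2 fstar (gradient f x) :=
        (hC2 _ (interior_subset hxs)).contDiffAt
          (mem_interior_iff_mem_nhds.mp hxs)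
      exact h1.differentiableAt (by norm_num)
    have hmin : IsLocalMin (fun y => fstar y - ⟪x, y⟫) (gradient f x) := by
      have hev : ∀ᶠ y in nhds (gradient f x), fstar (gradient f x) - ⟪x, gradient f x⟫ ≤
          fstar y - ⟪x, y⟫ := by
        filter_upwards [mem_interior_iff_mem_nhds.mp hxG] with y hy
        have h1 := hGle y hy x
        have h2 := fstarA x
        linarith
      exact hev
    have hderiv : HasFDerivAt (fun y => fstar y - ⟪x, y⟫)
        (fderiv ℝ fstar (gradient f x) - innerSL ℝ x) (gradient f x) :=
      hdf.hasFDerivAt.sub (innerSL ℝ x).hasFDerivAt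
    have h0 := hmin.hasFDerivAt_eq_zero hderiv
    have hfd : fderiv ℝ fstar (gradient f x) = innerSL ℝ x := by
      have := sub_eq_zero.mp h0
      exact this
    show (InnerProductSpace.toDual ℝ _).symm (fderiv ℝ fstar (gradient f x)) = x
    rw [hfd]
    apply ext_inner_right ℝ
    intro w
    rw [InnerProductSpace.toDual_symm_apply]
    simp
  -- continuity of the gradient
  have hgc : ContinuousAt (gradient f) x₀ := by
    rw [ContinuousAt, tendsto_iff_norm_sub_tendsto_zero]
    have hb : Filter.Tendsto (fun x => L * ‖x - x₀‖ ^ β) (nhds x₀) (nhds 0) := by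
      have h1 : Filter.Tendsto (fun x : EuclideanSpace ℝ (Fin n) => ‖x - x₀‖)
          (nhds x₀) (nhds 0) := by
        have hcont : Continuous (fun x : EuclideanSpace ℝ (Fin n) => ‖x - x₀‖) :=
          (continuous_id.sub continuous_const).norm
        have := hcont.tendsto x₀
        simpa using this
      have h2 : Filter.Tendsto (fun x : EuclideanSpace ℝ (Fin n) => ‖x - x₀‖ ^ β)
          (nhds x₀) (nhds 0) := by
        have := h1.rpow_const (p := β) (Or.inr hβ.1.le)
        simpa [Real.zero_rpow (ne_of_gt hβ.1)] using this
      have := h2.const_mul L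
      simpa using this
    refine squeeze_zero_norm (fun x => ?_) hb
    rw [norm_norm]
    exact hHolder x x₀
  -- strict differentiability of gradient fstar at y₀
  have hC2at : ContDiffAt ℝ 2 fstar y₀ := (hC2 y₀ (mem_of_mem_nhds hs)).contDiffAt hs
  have hφC1 : ContDiffAt ℝ 1 (gradient fstar) y₀ := by
    have h1 : ContDiffAt ℝ 1 (fderiv ℝ fstar) y₀ := hC2at.fderiv_right (by norm_num)
    have hA : ContDiff ℝ 1 (fun ℓ : StrongDual ℝ (EuclideanSpace ℝ (Fin n)) =>
        (InnerProductSpace.toDual ℝ (EuclideanSpace ℝ (Fin n))).symm ℓ) := by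
      let T : StrongDual ℝ (EuclideanSpace ℝ (Fin n)) →L[ℝ]
          EuclideanSpace ℝ (Fin n) :=
        { toFun := fun ℓ => (InnerProductSpace.toDual ℝ (EuclideanSpace ℝ (Fin n))).symm ℓ
          map_add' := fun a b => by
            apply ext_inner_right ℝ
            intro w
            rw [InnerProductSpace.toDual_symm_apply, inner_add_left,
              InnerProductSpace.toDual_symm_apply, InnerProductSpace.toDual_symm_apply]
            simp
          map_smul' := fun r a => by
            apply ext_inner_right ℝ
            intro w
            rw [InnerProductSpace.toDual_symm_apply, real_inner_smul_left,
              InnerProductSpace.toDual_symm_apply]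
            simp
          cont := (InnerProductSpace.toDual ℝ (EuclideanSpace ℝ (Fin n))).symm.continuous }
      exact T.contDiff
    exact hA.comp_contDiffAt y₀ h1
  have hstrictφ : HasStrictFDerivAt (gradient fstar) H y₀ := by
    have := hφC1.hasStrictFDerivAt (by norm_num)
    rwa [hH.fderiv] at this
  -- H as a continuous linear equivalence
  have hinj : Function.Injective H := by
    intro a b hab
    by_contra hne
    have hsub : a - b ≠ 0 := sub_ne_zero.mpr hne
    have hp := hpos _ hsub
    rw [map_sub, hab, sub_self] at hp
    simp at hp
  have hsurj : Function.Surjective (H : EuclideanSpace ℝ (Fin n) →ₗ[ℝ]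
      EuclideanSpace ℝ (Fin n)) := LinearMap.injective_iff_surjective.mp hinj
  let eH : EuclideanSpace ℝ (Fin n) ≃L[ℝ] EuclideanSpace ℝ (Fin n) :=
    (LinearEquiv.ofBijective (H : EuclideanSpace ℝ (Fin n) →ₗ[ℝ]
      EuclideanSpace ℝ (Fin n)) ⟨hinj, hsurj⟩).toContinuousLinearEquiv
  have heH : (eH : EuclideanSpace ℝ (Fin n) →L[ℝ] EuclideanSpace ℝ (Fin n)) = H := by
    ext v
    rfl
  have hstrictφ' : HasStrictFDerivAt (gradient fstar)
      (eH : EuclideanSpace ℝ (Fin n) →L[ℝ] EuclideanSpace ℝ (Fin n)) y₀ := by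
    rwa [heH]
  have hx₀eq : gradient fstar y₀ = x₀ := φgrad x₀ hy₀int (mem_interior_iff_mem_nhds.mpr hs)
  have hψd : HasStrictFDerivAt (hstrictφ'.localInverse (gradient fstar) eH y₀)
      (eH.symm : EuclideanSpace ℝ (Fin n) →L[ℝ] EuclideanSpace ℝ (Fin n)) x₀ := by
    have := hstrictφ'.to_localInverse
    rwa [hx₀eq] at this
  have heqv : gradient f =ᶠ[nhds x₀] hstrictφ'.localInverse (gradient fstar) eH y₀ := by
    have hy₀s : y₀ ∈ interior s := mem_interior_iff_mem_nhds.mpr hs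
    have hN : (interior Gset ∩ interior s) ∈ nhds y₀ :=
      Filter.inter_mem (isOpen_interior.mem_nhds hy₀int) (isOpen_interior.mem_nhds hy₀s)
    have h3 : ∀ᶠ x in nhds x₀, gradient f x ∈ interior Gset ∩ interior s :=
      hgc.eventually_mem hN
    have h4 : ∀ᶠ x in nhds x₀,
        hstrictφ'.localInverse (gradient fstar) eH y₀ (gradient fstar (gradient f x))
          = gradient f x :=
      hgc.tendsto.eventually hstrictφ'.eventually_left_inverse
    filter_upwards [h3, h4] with x hx3 hx4
    have hfix := φgrad x hx3.1 hx3.2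
    calc gradient f x
        = hstrictφ'.localInverse (gradient fstar) eH y₀ (gradient fstar (gradient f x)) :=
          hx4.symm
      _ = hstrictφ'.localInverse (gradient fstar) eH y₀ x := by rw [hfix]
  have hstrictf : HasStrictFDerivAt (gradient f)
      (eH.symm : EuclideanSpace ℝ (Fin n) →L[ℝ] EuclideanSpace ℝ (Fin n)) x₀ :=
    hψd.congr_of_eventuallyEq heqv.symm
  obtain ⟨K, t, htmem, hlip⟩ := hstrictf.exists_lipschitzOnWith
  obtain ⟨r, hr, hball⟩ := Metric.mem_nhds_iff.mp htmem
  refine ⟨(eH.symm : EuclideanSpace ℝ (Fin n) →L[ℝ] EuclideanSpace ℝ (Fin n)),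
    hstrictf.hasFDerivAt, ?_, ?_, (K : ℝ), r, hr, ?_⟩
  · rw [← heH]
    ext v
    simp
  · rw [← heH]
    ext v
    simp
  · intro x hx y hy
    have := hlip.dist_le_mul x (hball hx) y (hball hy)
    rw [dist_eq_norm, dist_eq_norm] at this
    exact this
end

section
/- Let α ∈ (0,1), β ∈ (1/(1+α), 1), and suppose U : B₁ → ℝ is strictly convex with U(0) = 0, DU(0) = 0, U ∈ C^{1,β}(B₁), and U* ∈ C^{2,α} on a neighborhood of 0 in ∂U(B₁). Then the minimum eigenvalue of D²U*(0) is strictly positive. -/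
open Real RealInnerProductSpace Metric


lemma convexOn_support_ineq {E : Type*} [NormedAddCommGroup E] [NormedSpace ℝ E]
    {S : Set E} {F : E → ℝ} (hF : ConvexOn ℝ S F) {a b : E} (ha : a ∈ S) (hb : b ∈ S)
    {f : E →L[ℝ] ℝ} (hf : HasFDerivAt F f a) : F a + f (b - a) ≤ F b := by
  set g : ℝ →ᵃ[ℝ] E := AffineMap.lineMap a b with hg
  have hmem0 : (0:ℝ) ∈ ⇑g ⁻¹' S := by simp [hg, ha]
  have hmem1 : (1:ℝ) ∈ ⇑g ⁻¹' S := by simp [hg, hb]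
  have hconv := hF.comp_affineMap g
  have hline : HasDerivAt (fun t : ℝ => g t) (b - a) 0 := by
    have h1 : HasDerivAt (fun t : ℝ => t • (b - a) + a) ((1:ℝ) • (b - a)) 0 :=
      ((hasDerivAt_id (0:ℝ)).smul_const (b - a)).add_const a
    simpa [hg, AffineMap.lineMap_apply] using h1
  have hg0 : g 0 = a := by simp [hg]
  have hf' : HasFDerivAt F f (g 0) := hg0 ▸ hf
  have hcomp : HasDerivAt (F ∘ g) (f (b - a)) 0 := hf'.comp_hasDerivAt 0 hline
  have hslope := hconv.le_slope_of_hasDerivAt hmem0 hmem1 zero_lt_one hcomp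
  have : slope (F ∘ g) 0 1 = F b - F a := by
    simp [slope, hg, Function.comp]
  rw [this] at hslope
  linarith

set_option maxHeartbeats 1000000 in
set_option synthInstance.maxHeartbeats 200000 in
theorem dual_strong_convexity_at_origin
    (n : ℕ) (α β L L₂ : ℝ)
    (hα : α ∈ Set.Ioo (0:ℝ) 1) (hβ : β ∈ Set.Ioo (1 / (1 + α)) 1)
    (U : EuclideanSpace ℝ (Fin n) → ℝ)
    (hconv : StrictConvexOn ℝ (ball (0 : EuclideanSpace ℝ (Fin n)) 1) U)
    (hU0 : U 0 = 0)
    (hDU0 : HasFDerivAt U (0 : EuclideanSpace ℝ (Fin n) →L[ℝ] ℝ) 0)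
    (hdiff : DifferentiableOn ℝ U (ball (0 : EuclideanSpace ℝ (Fin n)) 1))
    (hHolder : ∀ x ∈ ball (0 : EuclideanSpace ℝ (Fin n)) 1,
      ∀ y ∈ ball (0 : EuclideanSpace ℝ (Fin n)) 1,
        ‖gradient U x - gradient U y‖ ≤ L * ‖x - y‖ ^ β)
    (Ustar : EuclideanSpace ℝ (Fin n) → ℝ)
    (hUstar : Ustar = fun y => ⨆ x : ball (0 : EuclideanSpace ℝ (Fin n)) 1,
      (⟪(x : EuclideanSpace ℝ (Fin n)), y⟫ - U x))
    (s : Set (EuclideanSpace ℝ (Fin n))) (hs : s ∈ nhds (0 : EuclideanSpace ℝ (Fin n)))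
    (hC2 : ContDiffOn ℝ 2 Ustar s)
    (hHolder2 : ∀ y ∈ s, ∀ z ∈ s,
      ‖fderiv ℝ (gradient Ustar) y - fderiv ℝ (gradient Ustar) z‖ ≤ L₂ * ‖y - z‖ ^ α) :
    ∃ c > (0:ℝ), ∀ v : EuclideanSpace ℝ (Fin n),
      c * ‖v‖ ^ 2 ≤ ⟪fderiv ℝ (gradient Ustar) 0 v, v⟫ := by
  classical
  haveI : Nonempty (ball (0:(EuclideanSpace ℝ (Fin n))) 1) := ⟨⟨0, mem_ball_self one_pos⟩⟩
  obtain ⟨hα0, hα1⟩ := hα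
  obtain ⟨hβlo, hβ1⟩ := hβ
  have h1α : (0:ℝ) < 1 + α := by linarith
  have hβ0 : 0 < β := lt_trans (by positivity) hβlo
  have hβα : 1 < β * (1 + α) := by
    have := (div_lt_iff₀ h1α).mp hβlo
    linarith [this]
  have h1βlt : 1 / β < 1 + α := by
    rw [div_lt_iff₀ hβ0]; linarith [hβα]
  -- constants
  set L' : ℝ := max L 1 with hL'def
  have hL'pos : 0 < L' := lt_of_lt_of_le one_pos (le_max_right _ _)
  have hL'ge : L ≤ L' := le_max_left _ _
  set C : ℝ := max L₂ 1 with hCdef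
  have hCpos : 0 < C := lt_of_lt_of_le one_pos (le_max_right _ _)
  have hCge : L₂ ≤ C := le_max_left _ _
  -- the gradient of U vanishes at 0
  have hgradU0 : gradient U 0 = 0 := by
    rw [gradient, hDU0.fderiv, map_zero]
  -- U is nonnegative on the ball
  have hUnonneg : ∀ x ∈ ball (0:(EuclideanSpace ℝ (Fin n))) 1, 0 ≤ U x := by
    intro x hx
    have := convexOn_support_ineq hconv.convexOn (mem_ball_self one_pos) hx hDU0
    simpa [hU0] using this
  -- upper bound on U
  have hUup : ∀ x ∈ ball (0:(EuclideanSpace ℝ (Fin n))) 1, U x ≤ L' * ‖x‖ ^ β * ‖x‖ := by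
    intro x hx
    have hdx : DifferentiableAt ℝ U x :=
      hdiff.differentiableAt (isOpen_ball.mem_nhds hx)
    have hsupp := convexOn_support_ineq hconv.convexOn hx (mem_ball_self one_pos)
      hdx.hasFDerivAt
    have hfg : fderiv ℝ U x x = ⟪gradient U x, x⟫ :=
      (InnerProductSpace.toDual_symm_apply).symm
    have h1 : U x ≤ fderiv ℝ U x x := by
      have : fderiv ℝ U x (0 - x) = -(fderiv ℝ U x x) := by
        rw [zero_sub, map_neg]
      rw [this] at hsupp; linarith [hsupp, hU0]
    have h2 : ⟪gradient U x, x⟫ ≤ ‖gradient U x‖ * ‖x‖ := real_inner_le_norm _ _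
    have h3 : ‖gradient U x‖ ≤ L * ‖x‖ ^ β := by
      have := hHolder x hx 0 (mem_ball_self one_pos)
      simpa [hgradU0] using this
    have h4 : ‖gradient U x‖ * ‖x‖ ≤ L' * ‖x‖ ^ β * ‖x‖ := by
      apply mul_le_mul_of_nonneg_right _ (norm_nonneg x)
      exact h3.trans (mul_le_mul_of_nonneg_right hL'ge (rpow_nonneg (norm_nonneg x) β))
    calc U x ≤ fderiv ℝ U x x := h1
    _ = ⟪gradient U x, x⟫ := hfg
    _ ≤ ‖gradient U x‖ * ‖x‖ := h2
    _ ≤ L' * ‖x‖ ^ β * ‖x‖ := h4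
  -- boundedness of the defining family of Ustar
  have hbdd : ∀ y : (EuclideanSpace ℝ (Fin n)), BddAbove (Set.range fun x : ball (0:(EuclideanSpace ℝ (Fin n))) 1 =>
      (⟪(x : EuclideanSpace ℝ (Fin n)), y⟫ - U x)) := by
    intro y
    refine ⟨‖y‖, ?_⟩
    rintro z ⟨⟨x, hx⟩, rfl⟩
    have h1 : ⟪x, y⟫ ≤ ‖x‖ * ‖y‖ := real_inner_le_norm _ _
    have h2 : ‖x‖ < 1 := by simpa [mem_ball, dist_eq_norm] using hx
    have h3 : ‖x‖ * ‖y‖ ≤ 1 * ‖y‖ :=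
      mul_le_mul_of_nonneg_right h2.le (norm_nonneg _)
    have h4 := hUnonneg x hx
    show ⟪x, y⟫ - U x ≤ ‖y‖
    linarith
  -- lower bound on Ustar via a chosen point
  have hUstar_ge : ∀ (y : (EuclideanSpace ℝ (Fin n))), ∀ x ∈ ball (0:(EuclideanSpace ℝ (Fin n))) 1, ⟪x, y⟫ - U x ≤ Ustar y := by
    intro y x hx
    rw [hUstar]
    exact le_ciSup (hbdd y) ⟨x, hx⟩
  have hUstar_nonneg : ∀ y : (EuclideanSpace ℝ (Fin n)), 0 ≤ Ustar y := by
    intro y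
    have := hUstar_ge y 0 (mem_ball_self one_pos)
    simpa [hU0] using this
  have hUstar0 : Ustar 0 = 0 := by
    refine le_antisymm ?_ (hUstar_nonneg 0)
    rw [hUstar]
    refine ciSup_le ?_
    rintro ⟨x, hx⟩
    have := hUnonneg x hx
    show ⟪x, (0:EuclideanSpace ℝ (Fin n))⟫ - U x ≤ 0
    rw [inner_zero_right]
    linarith
  -- neighborhood
  obtain ⟨ρ, hρpos, hρsub⟩ := Metric.mem_nhds_iff.mp hs
  have h0s : (0:(EuclideanSpace ℝ (Fin n))) ∈ s := mem_of_mem_nhds hs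
  -- smoothness near 0
  have hC2' : ∀ y ∈ ball (0:(EuclideanSpace ℝ (Fin n))) ρ, ContDiffAt ℝ 2 Ustar y := fun y hy =>
    hC2.contDiffAt (Filter.mem_of_superset (isOpen_ball.mem_nhds hy) hρsub)
  have hUdiff : ∀ y ∈ ball (0:(EuclideanSpace ℝ (Fin n))) ρ, DifferentiableAt ℝ Ustar y := fun y hy =>
    (hC2' y hy).differentiableAt (by norm_num)
  have hGdiff : ∀ y ∈ ball (0:(EuclideanSpace ℝ (Fin n))) ρ, DifferentiableAt ℝ (gradient Ustar) y := by
    intro y hy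
    have h1 : ContDiffAt ℝ 1 (fderiv ℝ Ustar) y :=
      (hC2' y hy).fderiv_right (by norm_num)
    have h2 : DifferentiableAt ℝ (fderiv ℝ Ustar) y := h1.differentiableAt (by norm_num)
    have : gradient Ustar = fun z =>
        (InnerProductSpace.toDual ℝ (EuclideanSpace ℝ (Fin n))).symm (fderiv ℝ Ustar z) := rfl
    rw [this]
    have h3 : DifferentiableAt ℝ
        (fun w : StrongDual ℝ (EuclideanSpace ℝ (Fin n)) =>
          (InnerProductSpace.toDual ℝ (EuclideanSpace ℝ (Fin n))).symm w)
        (fderiv ℝ Ustar y) :=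
      ((InnerProductSpace.toDual ℝ (EuclideanSpace ℝ (Fin n))).symm.toContinuousLinearEquiv
        : StrongDual ℝ (EuclideanSpace ℝ (Fin n)) ≃L[ℝ]
          EuclideanSpace ℝ (Fin n)).differentiableAt
    exact h3.comp y h2
  -- gradient of Ustar vanishes at 0
  have hGrad0 : gradient Ustar 0 = 0 := by
    have hmin : IsLocalMin Ustar 0 := by
      apply Filter.Eventually.of_forall
      intro y
      rw [hUstar0]; exact hUstar_nonneg y
    rw [gradient, hmin.fderiv_eq_zero, map_zero]
  -- abbreviations
  set A : (EuclideanSpace ℝ (Fin n)) →L[ℝ] (EuclideanSpace ℝ (Fin n)) := fderiv ℝ (gradient Ustar) 0 with hA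
  set K : ℝ := (2 * L') ^ (-(1/β)) with hK
  have hKpos : 0 < K := rpow_pos_of_pos (by linarith) _
  set δ : ℝ := α + 1 - 1/β with hδ
  have hδpos : 0 < δ := by rw [hδ]; linarith
  set T₀ : ℝ := (K / (4 * C)) ^ (1/δ) with hT₀
  have hT₀pos : 0 < T₀ := rpow_pos_of_pos (by positivity) _
  set t : ℝ := min (min (ρ/2) L') T₀ with ht
  have htpos : 0 < t := by
    apply lt_min (lt_min (by linarith) hL'pos) hT₀pos
  have htρ : t < ρ := lt_of_le_of_lt ((min_le_left _ _).trans (min_le_left _ _)) (by linarith)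
  have htL : t < 2 * L' :=
    lt_of_le_of_lt ((min_le_left _ _).trans (min_le_right _ _)) (by linarith)
  have htT₀ : t ≤ T₀ := min_le_right _ _
  -- key estimate for unit vectors
  have hkey : ∀ e : (EuclideanSpace ℝ (Fin n)), ‖e‖ = 1 → K * t ^ (1/β - 1) / 2 ≤ ⟪A e, e⟫ := by
    intro e he
    set q : ℝ := ⟪A e, e⟫ with hq
    -- membership facts
    have hmem : ∀ τ : ℝ, τ ∈ Set.Icc 0 t → τ • e ∈ ball (0:(EuclideanSpace ℝ (Fin n))) ρ := by
      intro τ hτ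
      have : ‖τ • e‖ = τ := by
        rw [norm_smul, he, mul_one, Real.norm_eq_abs, abs_of_nonneg hτ.1]
      simp only [mem_ball, dist_zero_right, this]
      exact lt_of_le_of_lt hτ.2 htρ
    -- derivative facts
    have hline : ∀ τ : ℝ, HasDerivAt (fun σ : ℝ => σ • e) e τ := by
      intro τ
      simpa using (hasDerivAt_id τ).smul_const e
    -- φ := Ustar ∘ line has derivative ⟪gradient Ustar (τ•e), e⟫
    have hφ : ∀ τ ∈ Set.Icc (0:ℝ) t,
        HasDerivAt (fun σ : ℝ => Ustar (σ • e)) (⟪gradient Ustar (τ • e), e⟫) τ := by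
      intro τ hτ
      have hd := hUdiff _ (hmem τ hτ)
      have h1 : HasDerivAt (fun σ : ℝ => Ustar (σ • e)) (fderiv ℝ Ustar (τ • e) e) τ :=
        hd.hasFDerivAt.comp_hasDerivAt τ (hline τ)
      have h2 : fderiv ℝ Ustar (τ • e) e = ⟪gradient Ustar (τ • e), e⟫ :=
        (InnerProductSpace.toDual_symm_apply).symm
      rw [← h2]; exact h1
    -- ψ' := fun τ => ⟪e, gradient Ustar (τ • e)⟫ has derivative ⟪e, fderiv G (τ•e) e⟫
    have hψ' : ∀ τ ∈ Set.Icc (0:ℝ) t,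
        HasDerivAt (fun σ : ℝ => ⟪e, gradient Ustar (σ • e)⟫)
          (⟪e, fderiv ℝ (gradient Ustar) (τ • e) e⟫) τ := by
      intro τ hτ
      have hd := (hGdiff _ (hmem τ hτ)).hasFDerivAt
      have hF : HasFDerivAt (fun y : (EuclideanSpace ℝ (Fin n)) => ⟪e, gradient Ustar y⟫)
          ((innerSL ℝ e).comp (fderiv ℝ (gradient Ustar) (τ • e))) (τ • e) :=
        (innerSL ℝ e).hasFDerivAt.comp _ hd
      have := hF.comp_hasDerivAt τ (hline τ)
      simpa [Function.comp_def] using this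
    -- Hölder bound for the second derivative
    have hbound2 : ∀ τ ∈ Set.Icc (0:ℝ) t,
        |⟪e, fderiv ℝ (gradient Ustar) (τ • e) e⟫ - q| ≤ C * t ^ α := by
      intro τ hτ
      have hms : τ • e ∈ s := hρsub (hmem τ hτ)
      have hdiffA := hHolder2 (τ • e) hms 0 h0s
      have hnorm : ‖τ • e - 0‖ = τ := by
        rw [sub_zero, norm_smul, he, mul_one, Real.norm_eq_abs, abs_of_nonneg hτ.1]
      have hq' : q = ⟪e, A e⟫ := real_inner_comm _ _
      have h1 : ⟪e, fderiv ℝ (gradient Ustar) (τ • e) e⟫ - q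
          = ⟪e, (fderiv ℝ (gradient Ustar) (τ • e) - A) e⟫ := by
        rw [hq', ContinuousLinearMap.sub_apply, inner_sub_right]
      rw [h1]
      have h2 : |⟪e, (fderiv ℝ (gradient Ustar) (τ • e) - A) e⟫|
          ≤ ‖(fderiv ℝ (gradient Ustar) (τ • e) - A) e‖ := by
        have := abs_real_inner_le_norm e ((fderiv ℝ (gradient Ustar) (τ • e) - A) e)
        simpa [he] using this
      have h3 : ‖(fderiv ℝ (gradient Ustar) (τ • e) - A) e‖
          ≤ ‖fderiv ℝ (gradient Ustar) (τ • e) - A‖ := by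
        have := (fderiv ℝ (gradient Ustar) (τ • e) - A).le_opNorm e
        simpa [he] using this
      have h4 : ‖fderiv ℝ (gradient Ustar) (τ • e) - A‖ ≤ L₂ * τ ^ α := by
        rw [hA]; rw [hnorm] at hdiffA; exact hdiffA
      have h5 : L₂ * τ ^ α ≤ C * t ^ α := by
        have hτα : τ ^ α ≤ t ^ α := rpow_le_rpow hτ.1 hτ.2 hα0.le
        have : L₂ * τ ^ α ≤ C * τ ^ α :=
          mul_le_mul_of_nonneg_right hCge (rpow_nonneg hτ.1 α)
        exact this.trans (mul_le_mul_of_nonneg_left hτα hCpos.le)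
      linarith [h2.trans (h3.trans (h4.trans h5))]
    -- first MVT application: ψ' bound
    have hψ'0 : ⟪e, gradient Ustar ((0:ℝ) • e)⟫ = 0 := by
      rw [zero_smul, hGrad0, inner_zero_right]
    have hψ'bound : ∀ τ ∈ Set.Icc (0:ℝ) t,
        |⟪e, gradient Ustar (τ • e)⟫ - q * τ| ≤ C * t ^ α * τ := by
      intro τ hτ
      have hder : ∀ σ ∈ Set.Icc (0:ℝ) t,
          HasDerivWithinAt (fun σ : ℝ => ⟪e, gradient Ustar (σ • e)⟫ - q * σ)
            (⟪e, fderiv ℝ (gradient Ustar) (σ • e) e⟫ - q) (Set.Icc 0 t) σ := by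
        intro σ hσ
        have hlin2 : HasDerivAt (fun σ : ℝ => q * σ) q σ := by
          simpa using (hasDerivAt_id σ).const_mul q
        exact ((hψ' σ hσ).sub hlin2).hasDerivWithinAt
      have hbnd : ∀ σ ∈ Set.Ico (0:ℝ) t,
          ‖⟪e, fderiv ℝ (gradient Ustar) (σ • e) e⟫ - q‖ ≤ C * t ^ α := by
        intro σ hσ
        exact hbound2 σ ⟨hσ.1, hσ.2.le⟩
      have h := norm_image_sub_le_of_norm_deriv_le_segment' hder hbnd τ hτ
      simp only [zero_smul, hGrad0, inner_zero_right, mul_zero, sub_zero,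
        Real.norm_eq_abs] at h
      simpa using h
    -- second MVT application: ψ bound
    have hψbound : |Ustar (t • e) - q / 2 * t ^ 2| ≤ C * t ^ α * t * t := by
      have hder : ∀ σ ∈ Set.Icc (0:ℝ) t,
          HasDerivWithinAt (fun σ : ℝ => Ustar (σ • e) - q / 2 * σ ^ 2)
            (⟪gradient Ustar (σ • e), e⟫ - q * σ) (Set.Icc 0 t) σ := by
        intro σ hσ
        have h2 : HasDerivAt (fun σ : ℝ => q / 2 * σ ^ 2) (q * σ) σ := by
          have := (hasDerivAt_pow 2 σ).const_mul (q / 2)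
          exact this.congr_deriv (by ring)
        exact ((hφ σ hσ).sub h2).hasDerivWithinAt
      have hbnd : ∀ σ ∈ Set.Ico (0:ℝ) t,
          ‖⟪gradient Ustar (σ • e), e⟫ - q * σ‖ ≤ C * t ^ α * t := by
        intro σ hσ
        have h1 := hψ'bound σ ⟨hσ.1, hσ.2.le⟩
        have h2 : ⟪gradient Ustar (σ • e), e⟫ = ⟪e, gradient Ustar (σ • e)⟫ :=
          real_inner_comm _ _
        rw [Real.norm_eq_abs, h2]
        refine h1.trans ?_
        have : (0:ℝ) ≤ C * t ^ α := by positivity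
        nlinarith [hσ.2, hσ.1]
      have h := norm_image_sub_le_of_norm_deriv_le_segment' hder hbnd t
        ⟨htpos.le, le_rfl⟩
      simp only [zero_smul, hUstar0, Real.norm_eq_abs] at h
      have h2 : C * t ^ α * t * (t - 0) = C * t ^ α * t * t := by ring
      rw [h2] at h
      calc |Ustar (t • e) - q / 2 * t ^ 2|
          = |Ustar (t • e) - q / 2 * t ^ 2 - (0 - q / 2 * 0 ^ 2)| := by norm_num
      _ ≤ C * t ^ α * t * t := h
    -- lower bound on Ustar (t • e)
    set r : ℝ := (t / (2 * L')) ^ (1/β) with hr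
    have hrpos : 0 < r := rpow_pos_of_pos (by positivity) _
    have hrlt1 : r < 1 := by
      apply rpow_lt_one (by positivity) _ (by positivity)
      rw [div_lt_one (by linarith)]
      exact htL
    have hrβ : r ^ β = t / (2 * L') := by
      rw [hr, ← Real.rpow_mul (by positivity), one_div_mul_cancel hβ0.ne', Real.rpow_one]
    have hlow : r * t / 2 ≤ Ustar (t • e) := by
      have hxball : r • e ∈ ball (0:(EuclideanSpace ℝ (Fin n))) 1 := by
        simp only [mem_ball, dist_zero_right, norm_smul, he, mul_one,
          Real.norm_eq_abs, abs_of_nonneg hrpos.le]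
        exact hrlt1
      have h1 := hUstar_ge (t • e) (r • e) hxball
      have hinner : ⟪r • e, t • e⟫ = r * t := by
        rw [real_inner_smul_left, real_inner_smul_right, real_inner_self_eq_norm_sq, he]
        ring
      have hUx : U (r • e) ≤ t / 2 * r := by
        have := hUup (r • e) hxball
        have hnr : ‖r • e‖ = r := by
          rw [norm_smul, he, mul_one, Real.norm_eq_abs, abs_of_nonneg hrpos.le]
        rw [hnr, hrβ] at this
        calc U (r • e) ≤ L' * (t / (2 * L')) * r := this
        _ = t / 2 * r := by field_simp
      rw [hinner] at h1
      linarith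
    -- combine to get lower bound on q
    have hup : Ustar (t • e) ≤ q / 2 * t ^ 2 + C * t ^ α * t * t := by
      have h := (abs_le.mp hψbound).2
      linarith
    have hcomb : r * t / 2 ≤ q / 2 * t ^ 2 + C * t ^ α * t * t := hlow.trans hup
    -- r / t = K * t^(1/β - 1)
    have hrt : r = K * t ^ (1/β) := by
      rw [hr, hK, div_rpow htpos.le (by linarith : (0:ℝ) ≤ 2 * L'),
        Real.rpow_neg (by linarith : (0:ℝ) ≤ 2 * L')]
      ring
    have htβ : t ^ (1/β) = t ^ (1/β - 1) * t := by
      nth_rewrite 3 [← Real.rpow_one t]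
      rw [← Real.rpow_add htpos]
      norm_num
    -- condition from t ≤ T₀ :  4 C t^α ≤ K t^(1/β-1)
    have hsmall : 4 * C * t ^ α ≤ K * t ^ (1/β - 1) := by
      have h1 : t ^ δ ≤ K / (4 * C) := by
        have := rpow_le_rpow htpos.le htT₀ hδpos.le
        rwa [hT₀, ← Real.rpow_mul (by positivity), one_div_mul_cancel hδpos.ne',
          Real.rpow_one] at this
      have h2 : t ^ α = t ^ δ * t ^ (1/β - 1) := by
        rw [← Real.rpow_add htpos]
        congr 1
        rw [hδ]; ring
      rw [h2]
      calc 4 * C * (t ^ δ * t ^ (1/β - 1))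
          ≤ 4 * C * (K / (4 * C) * t ^ (1/β - 1)) := by
            apply mul_le_mul_of_nonneg_left _ (by positivity)
            exact mul_le_mul_of_nonneg_right h1 (rpow_pos_of_pos htpos _).le
      _ = K * t ^ (1/β - 1) := by field_simp
    -- conclude
    have ht2 : (0:ℝ) < t ^ 2 := by positivity
    have hqge : K * t ^ (1/β - 1) - 2 * C * t ^ α ≤ q := by
      have hts : r * t = K * t ^ (1/β - 1) * t ^ 2 := by
        rw [hrt, htβ]; ring
      have hctat : C * t ^ α * t * t = C * t ^ α * t ^ 2 := by ring
      rw [hts, hctat] at hcomb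
      nlinarith [hcomb, ht2]
    have : K * t ^ (1/β - 1) / 2 ≤ q := by
      nlinarith [hsmall, hqge]
    exact this
  -- final conclusion
  refine ⟨K * t ^ (1/β - 1) / 2,
    div_pos (mul_pos hKpos (rpow_pos_of_pos htpos _)) two_pos, ?_⟩
  intro v
  rcases eq_or_ne v 0 with rfl | hv
  · simp
  · have hnv : 0 < ‖v‖ := norm_pos_iff.mpr hv
    set e : (EuclideanSpace ℝ (Fin n)) := ‖v‖⁻¹ • v with he
    have hne : ‖e‖ = 1 := by
      rw [he, norm_smul, norm_inv, norm_norm, inv_mul_cancel₀ hnv.ne']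
    have hkey' := hkey e hne
    have hv' : v = ‖v‖ • e := by
      rw [he, smul_smul, mul_inv_cancel₀ hnv.ne', one_smul]
    have hlin : ⟪A v, v⟫ = ‖v‖ ^ 2 * ⟪A e, e⟫ := by
      conv_lhs => rw [hv']
      rw [map_smul, real_inner_smul_left, real_inner_smul_right]
      ring
    rw [hlin]
    have := mul_le_mul_of_nonneg_left hkey' (sq_nonneg ‖v‖)
    nlinarith [this]
end
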